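/- For integers k ≥ r ≥ 1 and l ≥ 1, the generating function of the (l,r)-Stirling numbers of the second kind satisfies ∑_{n≥k} S2(n,k)·z^n = z^k / ∏_{i=r}^{k} (1 − z·i^l), as an identity of formal power series in z. -/

import Mathlib

/-- The `(l,r)`-Stirling numbers of the second kind. -/
def S2 (l r : ℕ) : ℕ → ℕ → ℕ
  | n, k =>
    if _h1 : n < r then 0
    else if _h2 : n = r then (if k = r then 1 else 0)
    else S2 l r (n - 1) (k - 1) + k ^ l * S2 l r (n - 1) k
termination_by n _ => n
decreasing_by all_goals omega

lemma S2_of_lt (l r n k : ℕ) (h : n < r) : S2 l r n k = 0 := by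
  rw [S2, dif_pos h]

lemma S2_r (l r k : ℕ) (hr : 1 ≤ r) : S2 l r r k = if k = r then 1 else 0 := by
  rw [S2, dif_neg (by omega), dif_pos rfl]

lemma S2_succ (l r n k : ℕ) (h : r ≤ n) :
    S2 l r (n + 1) k = S2 l r n (k - 1) + k ^ l * S2 l r n k := by
  rw [S2, dif_neg (by omega), dif_neg (by omega)]
  rfl

lemma S2_lt (l r n k : ℕ) (h : k < r) : S2 l r n k = 0 := by
  induction n using Nat.strong_induction_on generalizing k with
  | _ n ih =>
    rcases Nat.lt_or_ge n r with hn | hn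
    · exact S2_of_lt l r n k hn
    · rcases Nat.eq_or_lt_of_le hn with hn | hn
      · rw [← hn, S2_r l r k (by omega), if_neg (by omega)]
      · obtain ⟨m, rfl⟩ : ∃ m, n = m + 1 := ⟨n - 1, by omega⟩
        rw [S2_succ l r m k (by omega), ih m (by omega) (k-1) (by omega),
          ih m (by omega) k (by omega)]
        simp

open PowerSeries in
lemma key (l r k : ℕ) (hr : 1 ≤ r) (hk : r ≤ k) :
    PowerSeries.mk (fun n => (S2 l r n k : ℚ)) *
      (∏ i ∈ Finset.Icc r k, (1 - PowerSeries.C (R := ℚ) ((i : ℚ) ^ l) * PowerSeries.X)) =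
      (PowerSeries.X : PowerSeries ℚ) ^ k := by
  induction k, hk using Nat.le_induction with
  | base =>
    rw [Finset.Icc_self, Finset.prod_singleton]
    ext n
    have h1 : PowerSeries.mk (fun n => (S2 l r n r : ℚ)) *
        (1 - PowerSeries.C (R := ℚ) ((r : ℚ) ^ l) * PowerSeries.X) =
        PowerSeries.mk (fun n => (S2 l r n r : ℚ)) -
        PowerSeries.C (R := ℚ) ((r : ℚ) ^ l) *
          (PowerSeries.mk (fun n => (S2 l r n r : ℚ)) * PowerSeries.X) := by ring
    rw [h1, map_sub, coeff_C_mul, coeff_X_pow]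
    cases n with
    | zero =>
      rw [coeff_zero_mul_X, coeff_mk, S2_of_lt l r 0 r (by omega), if_neg (by omega)]
      simp
    | succ m =>
      rw [coeff_succ_mul_X, coeff_mk, coeff_mk]
      rcases lt_trichotomy (m+1) r with h | h | h
      · rw [S2_of_lt l r (m+1) r h, S2_of_lt l r m r (by omega), if_neg (by omega)]
        simp
      · rw [h, S2_r l r r hr, S2_of_lt l r m r (by omega)]
        simp
      · rw [show m + 1 = m + 1 from rfl, S2_succ l r m r (by omega),
          S2_lt l r m (r-1) (by omega), if_neg (by omega)]
        push_cast
        ring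
  | succ k hk ih =>
    rw [Finset.prod_Icc_succ_top (by omega)]
    have step : PowerSeries.mk (fun n => (S2 l r n (k+1) : ℚ)) *
        (1 - PowerSeries.C (R := ℚ) ((((k+1) : ℕ) : ℚ) ^ l) * PowerSeries.X) =
        PowerSeries.X * PowerSeries.mk (fun n => (S2 l r n k : ℚ)) := by
      ext n
      have h1 : PowerSeries.mk (fun n => (S2 l r n (k+1) : ℚ)) *
          (1 - PowerSeries.C (R := ℚ) ((((k+1) : ℕ) : ℚ) ^ l) * PowerSeries.X) =
          PowerSeries.mk (fun n => (S2 l r n (k+1) : ℚ)) -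
          PowerSeries.C (R := ℚ) ((((k+1) : ℕ) : ℚ) ^ l) *
            (PowerSeries.mk (fun n => (S2 l r n (k+1) : ℚ)) * PowerSeries.X) := by ring
      rw [h1, map_sub, coeff_C_mul,
        show PowerSeries.X * PowerSeries.mk (fun n => (S2 l r n k : ℚ)) =
          PowerSeries.mk (fun n => (S2 l r n k : ℚ)) * PowerSeries.X by ring]
      cases n with
      | zero =>
        rw [coeff_zero_mul_X, coeff_zero_mul_X, coeff_mk,
          S2_of_lt l r 0 (k+1) (by omega)]
        simp
      | succ m =>
        rw [coeff_succ_mul_X, coeff_succ_mul_X, coeff_mk, coeff_mk, coeff_mk]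
        rcases lt_trichotomy (m+1) r with h | h | h
        · rw [S2_of_lt l r (m+1) (k+1) h, S2_of_lt l r m (k+1) (by omega),
            S2_of_lt l r m k (by omega)]
          simp
        · rw [h, S2_r l r (k+1) hr, if_neg (by omega : ¬ k + 1 = r),
            S2_of_lt l r m (k+1) (by omega), S2_of_lt l r m k (by omega)]
          simp
        · rw [S2_succ l r m (k+1) (by omega)]
          have : k + 1 - 1 = k := rfl
          rw [this]
          push_cast
          ring
    calc PowerSeries.mk (fun n => (S2 l r n (k+1) : ℚ)) *
          ((∏ i ∈ Finset.Icc r k, (1 - PowerSeries.C (R := ℚ) ((i : ℚ) ^ l) * PowerSeries.X)) *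
            (1 - PowerSeries.C (R := ℚ) ((((k+1) : ℕ) : ℚ) ^ l) * PowerSeries.X))
        = (PowerSeries.mk (fun n => (S2 l r n (k+1) : ℚ)) *
            (1 - PowerSeries.C (R := ℚ) ((((k+1) : ℕ) : ℚ) ^ l) * PowerSeries.X)) *
            ∏ i ∈ Finset.Icc r k, (1 - PowerSeries.C (R := ℚ) ((i : ℚ) ^ l) * PowerSeries.X) := by
          ring
      _ = PowerSeries.X * (PowerSeries.mk (fun n => (S2 l r n k : ℚ)) *
            ∏ i ∈ Finset.Icc r k, (1 - PowerSeries.C (R := ℚ) ((i : ℚ) ^ l) * PowerSeries.X)) := by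
          rw [step]; ring
      _ = PowerSeries.X ^ (k+1) := by rw [ih]; ring

open PowerSeries in
theorem stmt11 (l r k : ℕ) (hr : 1 ≤ r) (hk : r ≤ k) (hl : 1 ≤ l) :
    PowerSeries.mk (fun n => (S2 l r n k : ℚ)) =
      (PowerSeries.X : PowerSeries ℚ) ^ k *
        (∏ i ∈ Finset.Icc r k,
          (1 - PowerSeries.C (R := ℚ) ((i : ℚ) ^ l) * PowerSeries.X))⁻¹ := by
  rw [PowerSeries.eq_mul_inv_iff_mul_eq]
  · exact key l r k hr hk
  · rw [map_prod]
    simp
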